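/- Any half-open interval (n, k] with 0 ≤ n < k ≤ 2^s and n, k even can be decomposed into a disjoint union of dyadic intervals, each of the form ((j−1)·2^i, j·2^i] with 1 ≤ i ≤ s and 1 ≤ j ≤ 2^{s−i}, such that for each length 2^i at most two intervals of that length appear in the decomposition. -/
import Mathlib


open Finset

lemma double_Ioc_mem (c d x : ℕ) :
    x ∈ Finset.Ioc (2 * c) (2 * d) ↔ (x + 1) / 2 ∈ Finset.Ioc c d := by
  simp only [Finset.mem_Ioc]; omega

lemma double_mul_pow (j i : ℕ) : j * 2 ^ (i + 1) = 2 * (j * 2 ^ i) := by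
  rw [pow_succ]; ring

theorem dyadic_aux : ∀ s n k : ℕ, Even n → Even k → n < k → k ≤ 2 ^ s →
    ∃ S : Finset (ℕ × ℕ),
      (∀ p ∈ S, 1 ≤ p.1 ∧ p.1 ≤ s ∧ 1 ≤ p.2 ∧ p.2 ≤ 2 ^ (s - p.1)) ∧
      (Finset.Ioc n k = S.biUnion fun p => Finset.Ioc ((p.2 - 1) * 2 ^ p.1) (p.2 * 2 ^ p.1)) ∧
      (∀ p ∈ S, ∀ q ∈ S, p ≠ q →
        Disjoint (Finset.Ioc ((p.2 - 1) * 2 ^ p.1) (p.2 * 2 ^ p.1))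
          (Finset.Ioc ((q.2 - 1) * 2 ^ q.1) (q.2 * 2 ^ q.1))) ∧
      (∀ i : ℕ, (S.filter fun p => p.1 = i).card ≤ 2) := by
  intro s
  induction s with
  | zero =>
    intro n k hn hk hnk hks
    obtain ⟨b, rfl⟩ := hk
    norm_num at hks
    omega
  | succ s ih =>
    intro n k hn hk hnk hks
    obtain ⟨a, rfl⟩ := hn
    obtain ⟨b, rfl⟩ := hk
    have hpow : 2 ^ (s + 1) = 2 * 2 ^ s := by rw [pow_succ]; ring
    have hab : a < b := by omega
    have hb2s : b ≤ 2 ^ s := by omega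
    by_cases hcase : b ≤ a + 2
    · -- short interval: at most two length-2 pieces
      refine ⟨(Finset.Ioc a b).image fun j => (1, j), ?_, ?_, ?_, ?_⟩
      · rintro p hp
        simp only [mem_image, mem_Ioc] at hp
        obtain ⟨j, hj, rfl⟩ := hp
        refine ⟨le_refl 1, by omega, by omega, ?_⟩
        have : s + 1 - 1 = s := by omega
        rw [this]
        omega
      · ext x
        simp only [mem_biUnion, mem_image, mem_Ioc, pow_one]
        constructor
        · intro hx
          exact ⟨(1, (x + 1) / 2), ⟨(x + 1) / 2, by omega, rfl⟩, by simp; omega⟩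
        · rintro ⟨p, ⟨j, hj, rfl⟩, hx⟩
          simp only [pow_one] at hx
          omega
      · rintro p hp q hq hpq
        simp only [mem_image, mem_Ioc] at hp hq
        obtain ⟨j, hj, rfl⟩ := hp
        obtain ⟨j', hj', rfl⟩ := hq
        have hne : j ≠ j' := fun h => hpq (by rw [h])
        rw [Finset.disjoint_left]
        intro x hx hx'
        simp only [mem_Ioc, pow_one] at hx hx'
        omega
      · intro i
        calc ((((Finset.Ioc a b).image fun j => (1, j)).filter fun p => p.1 = i).card)
            ≤ ((Finset.Ioc a b).image fun j => (1, j)).card := Finset.card_filter_le _ _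
          _ ≤ (Finset.Ioc a b).card := Finset.card_image_le
          _ = b - a := Nat.card_Ioc a b
          _ ≤ 2 := by omega
    · -- long interval: peel ends, recurse on doubled middle
      push_neg at hcase
      obtain ⟨a1, a2, ha1, haa, hab1⟩ : ∃ a1 a2, a1 = a2 + a2 ∧ a ≤ a1 ∧ a1 ≤ a + 1 :=
        ⟨2 * ((a + 1) / 2), (a + 1) / 2, by omega, by omega, by omega⟩
      obtain ⟨b1, b2, hb1, hba, hbb⟩ : ∃ b1 b2, b1 = b2 + b2 ∧ b - 1 ≤ b1 ∧ b1 ≤ b :=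
        ⟨2 * (b / 2), b / 2, by omega, by omega, by omega⟩
      obtain ⟨S', hb', hcov', hdis', hcnt'⟩ :=
        ih a1 b1 ⟨a2, ha1⟩ ⟨b2, hb1⟩ (by omega) (by omega)
      refine ⟨(S'.image fun p => (p.1 + 1, p.2)) ∪
          ((Finset.Ioc a a1 ∪ Finset.Ioc b1 b).image fun j => (1, j)), ?_, ?_, ?_, ?_⟩
      · rintro p hp
        simp only [mem_union, mem_image, mem_Ioc] at hp
        rcases hp with ⟨q, hq, rfl⟩ | ⟨j, hj, rfl⟩
        · obtain ⟨h1, h2, h3, h4⟩ := hb' q hq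
          refine ⟨by omega, by omega, h3, ?_⟩
          have : s + 1 - (q.1 + 1) = s - q.1 := by omega
          rw [this]; exact h4
        · refine ⟨le_refl 1, by omega, by omega, ?_⟩
          have : s + 1 - 1 = s := by omega
          rw [this]
          omega
      · ext x
        have hmidmem : (2 * a1 < x ∧ x ≤ 2 * b1) ↔
            ∃ p ∈ S', 2 * ((p.2 - 1) * 2 ^ p.1) < x ∧ x ≤ 2 * (p.2 * 2 ^ p.1) := by
          have h2 := Finset.ext_iff.mp hcov' ((x + 1) / 2)
          simp only [Finset.mem_biUnion, Finset.mem_Ioc] at h2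
          constructor
          · intro hx
            obtain ⟨p, hp, h3, h4⟩ := h2.mp (by omega)
            exact ⟨p, hp, by omega, by omega⟩
          · rintro ⟨p, hp, h3, h4⟩
            have := h2.mpr ⟨p, hp, by omega, by omega⟩
            omega
        simp only [mem_biUnion, mem_union, mem_image, mem_Ioc]
        constructor
        · intro hx
          by_cases hxa : x ≤ 2 * a1
          · refine ⟨(1, (x + 1) / 2), Or.inr ⟨(x + 1) / 2, Or.inl ⟨by omega, by omega⟩, rfl⟩, ?_⟩
            simp only [pow_one]
            omega
          · by_cases hxb : 2 * b1 < x
            · refine ⟨(1, (x + 1) / 2), Or.inr ⟨(x + 1) / 2, Or.inr ⟨by omega, by omega⟩, rfl⟩, ?_⟩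
              simp only [pow_one]
              omega
            · obtain ⟨p, hp, h3, h4⟩ := hmidmem.mp (by omega)
              refine ⟨(p.1 + 1, p.2), Or.inl ⟨p, hp, rfl⟩, ?_⟩
              simp only [double_mul_pow]
              exact ⟨h3, h4⟩
        · rintro ⟨p, hmem | ⟨j, hj, rfl⟩, hx⟩
          · obtain ⟨q, hq, rfl⟩ := hmem
            simp only [double_mul_pow] at hx
            have := hmidmem.mpr ⟨q, hq, hx.1, hx.2⟩
            omega
          · simp only [pow_one] at hx
            omega
      · rintro p hp q hq hpq
        rw [Finset.disjoint_left]
        intro x hxp hxq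
        simp only [mem_union, mem_image, mem_Ioc] at hp hq
        have hsub : ∀ r ∈ S', ∀ y, y ∈ Finset.Ioc ((r.2 - 1) * 2 ^ (r.1 + 1)) (r.2 * 2 ^ (r.1 + 1)) →
            2 * a1 < y ∧ y ≤ 2 * b1 := by
          intro r hr y hy
          simp only [mem_Ioc, double_mul_pow] at hy
          have hmem : (y + 1) / 2 ∈ Finset.Ioc a1 b1 := by
            rw [hcov']
            exact Finset.mem_biUnion.mpr ⟨r, hr, by simp only [mem_Ioc]; omega⟩
          simp only [mem_Ioc] at hmem
          omega
        rcases hp with ⟨p', hp', rfl⟩ | ⟨j, hj, rfl⟩ <;>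
          rcases hq with ⟨q', hq', rfl⟩ | ⟨j', hj', rfl⟩
        · have hne : p' ≠ q' := by
            intro h; exact hpq (by rw [h])
          have hd := hdis' p' hp' q' hq' hne
          simp only [mem_Ioc, double_mul_pow] at hxp hxq
          have m1 : (x + 1) / 2 ∈ Finset.Ioc ((p'.2 - 1) * 2 ^ p'.1) (p'.2 * 2 ^ p'.1) := by
            simp only [mem_Ioc]; omega
          have m2 : (x + 1) / 2 ∈ Finset.Ioc ((q'.2 - 1) * 2 ^ q'.1) (q'.2 * 2 ^ q'.1) := by
            simp only [mem_Ioc]; omega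
          exact Finset.disjoint_left.mp hd m1 m2
        · have h1 := hsub p' hp' x hxp
          simp only [mem_Ioc, pow_one] at hxq
          omega
        · have h1 := hsub q' hq' x hxq
          simp only [mem_Ioc, pow_one] at hxp
          omega
        · have hne : j ≠ j' := fun h => hpq (by rw [h])
          simp only [mem_Ioc, pow_one] at hxp hxq
          omega
      · intro i
        rw [Finset.filter_union]
        refine le_trans (Finset.card_union_le _ _) ?_
        rcases Nat.lt_or_ge i 2 with hi | hi
        · -- i = 0 or 1 : first part empty, second ≤ 2
          have h1 : ((S'.image fun p => (p.1 + 1, p.2)).filter fun p => p.1 = i) = ∅ := by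
            rw [Finset.filter_eq_empty_iff]
            rintro p hp
            simp only [mem_image] at hp
            obtain ⟨q, hq, rfl⟩ := hp
            have := (hb' q hq).1
            simp only
            omega
          rw [h1]
          simp only [Finset.card_empty, zero_add]
          calc ((((Finset.Ioc a a1 ∪ Finset.Ioc b1 b).image fun j => (1, j)).filter
                fun p => p.1 = i).card)
              ≤ ((Finset.Ioc a a1 ∪ Finset.Ioc b1 b).image fun j => (1, j)).card :=
                Finset.card_filter_le _ _
            _ ≤ (Finset.Ioc a a1 ∪ Finset.Ioc b1 b).card := Finset.card_image_le
            _ ≤ (Finset.Ioc a a1).card + (Finset.Ioc b1 b).card := Finset.card_union_le _ _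
            _ = (a1 - a) + (b - b1) := by rw [Nat.card_Ioc, Nat.card_Ioc]
            _ ≤ 2 := by omega
        · have h2 : (((Finset.Ioc a a1 ∪ Finset.Ioc b1 b).image fun j => (1, j)).filter
              fun p => p.1 = i) = ∅ := by
            rw [Finset.filter_eq_empty_iff]
            rintro p hp
            simp only [mem_image] at hp
            obtain ⟨j, hj, rfl⟩ := hp
            simp only
            omega
          rw [h2]
          simp only [Finset.card_empty, add_zero]
          have h3 : ((S'.image fun p => (p.1 + 1, p.2)).filter fun p => p.1 = i) =
              (S'.filter fun q => q.1 = i - 1).image fun q => (q.1 + 1, q.2) := by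
            ext p
            simp only [mem_filter, mem_image]
            constructor
            · rintro ⟨⟨q, hq, rfl⟩, h⟩
              exact ⟨q, ⟨hq, by omega⟩, rfl⟩
            · rintro ⟨q, ⟨hq, hq1⟩, rfl⟩
              exact ⟨⟨q, hq, rfl⟩, by simp only; omega⟩
          rw [h3]
          calc ((S'.filter fun q => q.1 = i - 1).image fun q => (q.1 + 1, q.2)).card
              ≤ (S'.filter fun q => q.1 = i - 1).card := Finset.card_image_le
            _ ≤ 2 := hcnt' (i - 1)


/-- Any interval `(n, k]` with `0 ≤ n < k ≤ 2^s` and `n, k` even can be decomposed into a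
disjoint union of dyadic intervals `((j−1)·2^i, j·2^i]` with `1 ≤ i ≤ s`,
`1 ≤ j ≤ 2^{s−i}`, such that each length `2^i` appears at most twice. -/
theorem dyadic_decomposition (s n k : ℕ) (hn : Even n) (hk : Even k)
    (hnk : n < k) (hks : k ≤ 2 ^ s) :
    ∃ S : Finset (ℕ × ℕ),
      (∀ p ∈ S, 1 ≤ p.1 ∧ p.1 ≤ s ∧ 1 ≤ p.2 ∧ p.2 ≤ 2 ^ (s - p.1)) ∧
      (Finset.Ioc n k = S.biUnion fun p => Finset.Ioc ((p.2 - 1) * 2 ^ p.1) (p.2 * 2 ^ p.1)) ∧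
      (∀ p ∈ S, ∀ q ∈ S, p ≠ q →
        Disjoint (Finset.Ioc ((p.2 - 1) * 2 ^ p.1) (p.2 * 2 ^ p.1))
          (Finset.Ioc ((q.2 - 1) * 2 ^ q.1) (q.2 * 2 ^ q.1))) ∧
      (∀ i : ℕ, (S.filter fun p => p.1 = i).card ≤ 2) := by
  exact dyadic_aux s n k hn hk hnk hks
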